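/- Let ψ be a convex function on R^d, let e_1 ∈ ∂ψ-related data satisfy: dom ψ ⊆ {z : z_1 ≤ 1}, ψ(e_1) finite, and {c e_1 : c ≥ 0} ⊆ ∂ψ(e_1). For θ > 0 define C_θ = {x = (x_1, x') : x_1 > 0, |x'| ≤ θ x_1}. If x ∈ C_θ and z ∈ ∂ψ*(x) (equivalently x ∈ ∂ψ(z)), then z_1 ≤ 1 and z_1 − 1 ≥ −θ|z'|, i.e. z ∈ {z : −θ|z'| ≤ z_1 − 1 ≤ 0}. -/

import Mathlib

open Metric
open RealInnerProductSpace

/-- If `ψ` is convex with `dom ψ ⊆ {z₁ ≤ 1}`, `ψ(e₁)` finite, and the ray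
`{c e₁ : c ≥ 0}` contained in `∂ψ(e₁)`, then for `x` in the cone
`C_θ = {x : x₁ > 0, |x'| ≤ θ x₁}` and `z` with `x ∈ ∂ψ(z)`, one has `z₁ ≤ 1` and
`z₁ − 1 ≥ −θ|z'|`. -/
theorem cone_dual_subgradient_location (d : ℕ) (hd : 1 ≤ d)
    (e₁ : EuclideanSpace ℝ (Fin d))
    (he₁ : e₁ = EuclideanSpace.single (⟨0, by omega⟩ : Fin d) 1)
    (ψ : EuclideanSpace ℝ (Fin d) → EReal)
    (hbot : ∀ z, ψ z ≠ ⊥)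
    (hconv : ∀ z w : EuclideanSpace ℝ (Fin d), ∀ s : ℝ, 0 ≤ s → s ≤ 1 →
      ψ (s • z + (1 - s) • w) ≤ (s : EReal) * ψ z + ((1 - s : ℝ) : EReal) * ψ w)
    (hdom : ∀ z, ψ z ≠ ⊤ → ⟪z, e₁⟫ ≤ 1)
    (hfin : ∃ r : ℝ, ψ e₁ = (r : EReal))
    (hray : ∀ c : ℝ, 0 ≤ c → ∀ y,
      ψ e₁ + ((⟪c • e₁, y - e₁⟫ : ℝ) : EReal) ≤ ψ y) :
    ∀ θ : ℝ, 0 < θ → ∀ x z : EuclideanSpace ℝ (Fin d),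
      0 < ⟪x, e₁⟫ → ‖x - ⟪x, e₁⟫ • e₁‖ ≤ θ * ⟪x, e₁⟫ →
      (∀ y, ψ z + ((⟪x, y - z⟫ : ℝ) : EReal) ≤ ψ y) →
      ⟪z, e₁⟫ ≤ 1 ∧ -θ * ‖z - ⟪z, e₁⟫ • e₁‖ ≤ ⟪z, e₁⟫ - 1 := by
  intro θ hθ x z hx1 hx' hsub
  obtain ⟨r, hr⟩ := hfin
  have h1 := hsub e₁
  rw [hr] at h1
  -- ψ z is finite
  have hne : ψ z ≠ ⊤ := by
    intro h
    rw [h] at h1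
    simp [EReal.top_add_of_ne_bot] at h1
  have hzfin : ((ψ z).toReal : EReal) = ψ z := EReal.coe_toReal hne (hbot z)
  set s : ℝ := (ψ z).toReal with hs
  -- from hray with c = 0 : r ≤ s
  have h2 := hray 0 le_rfl z
  rw [hr] at h2
  simp only [zero_smul, inner_zero_left, EReal.coe_zero, add_zero, ← hzfin] at h2
  have hrs : r ≤ s := by exact_mod_cast h2
  -- from h1 : s + ⟪x, e₁ - z⟫ ≤ r
  rw [← hzfin] at h1
  rw [← EReal.coe_add] at h1
  have h1' : s + ⟪x, e₁ - z⟫ ≤ r := by exact_mod_cast h1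
  have hkey : (0 : ℝ) ≤ ⟪x, z - e₁⟫ := by
    have : ⟪x, z - e₁⟫ = -⟪x, e₁ - z⟫ := by
      rw [← inner_neg_right]; congr 1; abel
    rw [this]; linarith
  have hz1 : ⟪z, e₁⟫ ≤ 1 := hdom z hne
  refine ⟨hz1, ?_⟩
  -- geometry
  have hee : ⟪e₁, e₁⟫ = (1 : ℝ) := by
    rw [he₁, EuclideanSpace.inner_single_left]
    simp [EuclideanSpace.single_apply]
  set x1 : ℝ := ⟪x, e₁⟫
  set z1 : ℝ := ⟪z, e₁⟫
  set x' := x - x1 • e₁ with hx'def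
  set z' := z - z1 • e₁ with hz'def
  have hsplit : ⟪x, z - e₁⟫ = ⟪x', z'⟫ + x1 * (z1 - 1) := by
    simp only [hx'def, hz'def, inner_sub_left, inner_sub_right, inner_smul_left,
      inner_smul_right, hee, conj_trivial]
    have hc1 : (inner ℝ e₁ x : ℝ) = x1 := real_inner_comm x e₁
    have hc2 : (inner ℝ e₁ z : ℝ) = z1 := real_inner_comm z e₁
    have hc3 : (inner ℝ x e₁ : ℝ) = x1 := rfl
    rw [hc2, hc3]
    ring
  have hcs : ⟪x', z'⟫ ≤ ‖x'‖ * ‖z'‖ := real_inner_le_norm x' z'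
  have hb : x1 * (z1 - 1) ≥ -(θ * x1) * ‖z'‖ := by
    have h3 : ‖x'‖ * ‖z'‖ ≤ (θ * x1) * ‖z'‖ :=
      mul_le_mul_of_nonneg_right hx' (norm_nonneg _)
    nlinarith [hkey, hsplit]
  have : z1 - 1 ≥ -θ * ‖z'‖ := by
    nlinarith [hb]
  linarith [this]
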